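/- With $\Sigma$ and the path sums as above, the key inductive identity holds: for all $1 \le l \le k < l+m \le n+1$, $x^{(l)}_m = X^{(l)}_m(x) \cdot Y^{*(l-1)}_m(\Sigma(x))$. -/

import Mathlib

/- Lattice-path combinatorics on the weighted lattice `L₁[n,k]`.

A shortest path from `(l,m)` to `(1,n)` is encoded by the strictly increasing
sequence `c : Fin (l+1) → Fin (n+2)` of its run boundaries: the horizontal run
on level `l - j` goes from column `c j` to column `c (j+1) - 1`, followed by a
diagonal step to `(l - j - 1, c (j+1))`.  The weight of a path is the product
over its horizontal runs of `x_{i,start}/x_{i,end}` (the product of the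
horizontal strip weights `x_{i,j}/x_{i,j+1}`, which telescopes). -/

attribute [local instance] Classical.propDecidable

noncomputable section

/-- Shortest partial paths from `(l,m)` to `(1,n)` on `L₁[n,k]`. -/
def pathsX (n l m : ℕ) : Finset (Fin (l + 1) → Fin (n + 2)) :=
  Finset.univ.filter fun c =>
    (c 0 : ℕ) = m ∧ StrictMono c ∧ (c (Fin.last l) : ℕ) = n + 1

/-- The weight of a path. -/
def wtX (x : ℕ → ℕ → ℚ) (l : ℕ) {n : ℕ} (c : Fin (l + 1) → Fin (n + 2)) : ℚ :=
  ∏ j : Fin l, x (l - (j : ℕ)) (c j.castSucc) / x (l - (j : ℕ)) ((c j.succ : ℕ) - 1)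

/-- `X^{(l)}_m`: the sum of the weights of all shortest paths from `(l,m)` to `(1,n)`. -/
def Xsum (x : ℕ → ℕ → ℚ) (n l m : ℕ) : ℚ :=
  ∑ c ∈ pathsX n l m, wtX x l c


/-- `X^{(l)}_m` with the boundary conventions `X^{(l)}_m = 1/x^{(1)}_n` when
`l + m = k`, and `X^{(k+1)}_m = 1`. -/
def XE (x : ℕ → ℕ → ℚ) (n k l m : ℕ) : ℚ :=
  if k < l then 1 else if l + m = k then (x 1 n)⁻¹ else Xsum x n l m

/-- The rational map `Σ : x ↦ y`, `y^{(l)}_m = x^{(l+1)}_m ⬝ X^{(l)}_m(x)/X^{(l+1)}_m(x)`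
(with the convention `x^{(k+1)}_m = 1`). -/
def SigmaMap (x : ℕ → ℕ → ℚ) (n k : ℕ) : ℕ → ℕ → ℚ := fun l m =>
  (if l + 1 ≤ k then x (l + 1) m else 1) * (XE x n k l m / XE x n k (l + 1) m)

/-- Shortest partial paths on the lattice `L₂[n,k]` from `(k,0)` to `(l,m)`,
encoded by their run boundaries `c : Fin (k-l+1) → Fin (n+2)` with `c 0 = 0`:
the run at level `k - j` starts at column `c (j+1)`, reached by a vertical
(diagonal) strip from `(k - j + 1, c (j+1) - 1)`. -/
def pathsY (n k l m : ℕ) : Finset (Fin (k - l + 1) → Fin (n + 2)) :=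
  Finset.univ.filter fun c =>
    (c 0 : ℕ) = 0 ∧ StrictMono c ∧ (c (Fin.last (k - l)) : ℕ) ≤ m

/-- The weight of a partial path on `L₂[n,k]`: the product of the weights
`y_{i-1,j+1}/y_{i,j}` of its vertical strips `(i,j)–(i-1,j+1)`. -/
def wtY (y : ℕ → ℕ → ℚ) (k l : ℕ) {n : ℕ} (c : Fin (k - l + 1) → Fin (n + 2)) : ℚ :=
  ∏ j : Fin (k - l),
    y (k - (j : ℕ) - 1) (c j.succ) / y (k - (j : ℕ)) ((c j.succ : ℕ) - 1)

/-- `Y^{*(l)}_m(y)`: the sum of the weights of all shortest partial paths on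
`L₂[n,k]` from `(k,0)` to `(l,m)`. -/
def YstarSum (y : ℕ → ℕ → ℚ) (n k l m : ℕ) : ℚ :=
  ∑ c ∈ pathsY n k l m, wtY y k l c

/-- `Y^{*(l)}_m` with the boundary convention `Y^{*(0)}_m = 1/y^{(k)}_0`. -/
def YstarE (y : ℕ → ℕ → ℚ) (n k l m : ℕ) : ℚ :=
  if l = 0 then (y k 0)⁻¹ else YstarSum y n k l m

/-- The rational map `Ξ : y ↦ x`, `x^{(l)}_m = y^{(l)}_m ⬝ Y^{*(l-1)}_m(y)/Y^{*(l)}_m(y)`. -/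
def XiMap (y : ℕ → ℕ → ℚ) (n k : ℕ) : ℕ → ℕ → ℚ := fun l m =>
  y l m * (YstarE y n k (l - 1) m / YstarE y n k l m)


namespace Stmt4Aux

theorem gap {N M : ℕ} {c : Fin N → Fin M} (hc : StrictMono c) :
    ∀ d : ℕ, ∀ a b : Fin N, (b : ℕ) = (a : ℕ) + d → (c a : ℕ) + d ≤ (c b : ℕ) := by
  intro d
  induction d with
  | zero =>
    intro a b h
    have : b = a := Fin.ext (by omega)
    subst this; omega
  | succ d ih =>
    intro a b h
    have hb' : (a : ℕ) + d < N := by have := b.isLt; omega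
    have h1 := ih a ⟨(a : ℕ) + d, hb'⟩ rfl
    have h2 : c ⟨(a : ℕ) + d, hb'⟩ < c b := hc (by rw [Fin.lt_def]; simp; omega)
    rw [Fin.lt_def] at h2
    omega

def S2 (g : ℕ → ℕ → ℚ) (n L m : ℕ) : ℚ :=
  ∑ c ∈ Finset.univ.filter (fun c : Fin (L + 1) → Fin (n + 2) =>
      (c 0 : ℕ) = 0 ∧ StrictMono c ∧ (c (Fin.last L) : ℕ) ≤ m),
    ∏ j : Fin L, g (j : ℕ) (c j.succ : ℕ)

theorem YstarSum_eq_S2 (y : ℕ → ℕ → ℚ) (n k l m : ℕ) :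
    YstarSum y n k l m
      = S2 (fun j v => y (k - j - 1) v / y (k - j) (v - 1)) n (k - l) m := rfl

theorem S2_zero (g : ℕ → ℕ → ℚ) (n m : ℕ) : S2 g n 0 m = 1 := by
  rw [S2]
  have hset : (Finset.univ.filter (fun c : Fin 1 → Fin (n + 2) =>
      (c 0 : ℕ) = 0 ∧ StrictMono c ∧ (c (Fin.last 0) : ℕ) ≤ m))
      = {fun _ => (0 : Fin (n + 2))} := by
    apply Finset.ext
    intro c
    simp only [Finset.mem_filter, Finset.mem_univ, true_and, Finset.mem_singleton]
    constructor
    · rintro ⟨h0, -, -⟩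
      funext i
      have : i = 0 := Fin.ext (by omega)
      subst this
      exact Fin.ext (by simpa using h0)
    · rintro rfl
      refine ⟨rfl, ?_, by simp⟩
      intro a b hab
      have := a.isLt; have := b.isLt
      rw [Fin.lt_def] at hab
      omega
  rw [hset, Finset.sum_singleton]
  simp

theorem S2_rec (g : ℕ → ℕ → ℚ) (n L m : ℕ) (hm : m ≤ n + 1) :
    S2 g n (L + 1) m = ∑ j ∈ Finset.Icc (L + 1) m, g L j * S2 g n L (j - 1) := by
  rw [S2]
  rw [← Finset.sum_fiberwise_of_maps_to
    (g := fun c : Fin (L + 2) → Fin (n + 2) => (c (Fin.last (L + 1)) : ℕ))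
    (t := Finset.Icc (L + 1) m) ?hmaps]
  case hmaps =>
    intro c hc
    simp only [Finset.mem_filter, Finset.mem_univ, true_and] at hc
    obtain ⟨h0, hmono, hlast⟩ := hc
    have := gap hmono (L + 1) 0 (Fin.last (L + 1)) (by simp [h0])
    simp only [Finset.mem_Icc]
    omega
  apply Finset.sum_congr rfl
  intro j hj
  simp only [Finset.mem_Icc] at hj
  have hjn2 : j < n + 2 := by omega
  rw [S2, Finset.mul_sum]
  apply Finset.sum_nbij' (i := fun c => c ∘ Fin.castSucc)
    (j := fun c => Fin.snoc c ⟨j, hjn2⟩)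
  · -- forward membership
    intro c hc
    simp only [Finset.mem_filter, Finset.mem_univ, true_and] at hc ⊢
    obtain ⟨⟨h0, hmono, hlast⟩, hfib⟩ := hc
    refine ⟨by simpa using h0, hmono.comp (fun a b hab => by
      rw [Fin.lt_def] at hab ⊢; simpa using hab), ?_⟩
    have : c (Fin.castSucc (Fin.last L)) < c (Fin.last (L + 1)) :=
      hmono (by rw [Fin.lt_def]; simp)
    rw [Fin.lt_def] at this
    simp only [Function.comp_apply]
    omega
  · -- backward membership
    intro c hc
    simp only [Finset.mem_filter, Finset.mem_univ, true_and] at hc ⊢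
    obtain ⟨h0, hmono, hlast⟩ := hc
    have hmono' : StrictMono (Fin.snoc c (⟨j, hjn2⟩ : Fin (n + 2))) := by
      rw [Fin.strictMono_iff_lt_succ]
      intro i
      induction i using Fin.lastCases with
      | last =>
        rw [Fin.succ_last, Fin.snoc_castSucc, Fin.snoc_last, Fin.lt_def]
        simp only []
        omega
      | cast i =>
        rw [Fin.succ_castSucc, Fin.snoc_castSucc, Fin.snoc_castSucc]
        exact Fin.strictMono_iff_lt_succ.mp hmono i
    refine ⟨⟨?_, hmono', by rw [Fin.snoc_last]; exact hj.2⟩, by rw [Fin.snoc_last]⟩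
    rw [show (0 : Fin (L + 2)) = Fin.castSucc 0 by simp, Fin.snoc_castSucc]
    exact h0
  · -- left inverse
    intro c hc
    simp only [Finset.mem_filter, Finset.mem_univ, true_and] at hc
    obtain ⟨⟨h0, hmono, hlast⟩, hfib⟩ := hc
    funext i
    induction i using Fin.lastCases with
    | last => rw [Fin.snoc_last]; exact Fin.ext (by simp [hfib])
    | cast i => rw [Fin.snoc_castSucc]; rfl
  · -- right inverse
    intro c hc
    funext i
    simp only [Function.comp_apply, Fin.snoc_castSucc]
  · -- weights
    intro c hc
    simp only [Finset.mem_filter, Finset.mem_univ, true_and] at hc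
    obtain ⟨⟨h0, hmono, hlast⟩, hfib⟩ := hc
    rw [Fin.prod_univ_castSucc (f := fun i : Fin (L + 1) => g (i : ℕ) (c i.succ : ℕ))]
    rw [mul_comm]
    congr 1
    rw [Fin.succ_last]
    simp [hfib]

def T2 (h : ℕ → ℕ → ℕ → ℚ) (n L m : ℕ) : ℚ :=
  ∑ c ∈ pathsX n L m, ∏ i : Fin L, h (i : ℕ) (c i.castSucc : ℕ) (c i.succ : ℕ)

theorem T2_congr {h1 h2 : ℕ → ℕ → ℕ → ℚ} {n L m : ℕ}
    (hc : ∀ i a b, i < L → h1 i a b = h2 i a b) : T2 h1 n L m = T2 h2 n L m :=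
  Finset.sum_congr rfl fun c _ => Finset.prod_congr rfl fun i _ => hc i _ _ i.isLt

theorem T2_split (h : ℕ → ℕ → ℕ → ℚ) (n L j : ℕ) (hj : 1 ≤ j) (hjn : j ≤ n + 1)
    (h1 : h 0 (j - 1) j = 1) (r : ℚ)
    (hr : ∀ b, j < b → b + L ≤ n + 1 → h 0 (j - 1) b = r * h 0 j b) :
    T2 h n (L + 1) (j - 1)
      = T2 (fun i a b => h (i + 1) a b) n L j + r * T2 h n (L + 1) j := by
  have hjn2 : j < n + 2 := by omega
  have hj1n2 : j - 1 < n + 2 := by omega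
  rw [T2, ← Finset.sum_filter_add_sum_filter_not (pathsX n (L + 1) (j - 1))
    (fun c => (c 1 : ℕ) = j)]
  congr 1
  · -- paths whose first run is trivial: drop the first point
    rw [T2]
    apply Finset.sum_nbij' (i := fun c => c ∘ Fin.succ)
      (j := fun c => Fin.cons ⟨j - 1, hj1n2⟩ c)
    · intro c hc
      simp only [pathsX, Finset.mem_filter, Finset.mem_univ, true_and] at hc ⊢
      obtain ⟨⟨h0, hmono, hlast⟩, hfib⟩ := hc
      refine ⟨?_, hmono.comp (fun a b hab => by
        rw [Fin.lt_def] at hab ⊢; simpa using hab), ?_⟩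
      · have : (0 : Fin (L + 1)).succ = (1 : Fin (L + 2)) := by
          apply Fin.ext; simp
        simp only [Function.comp_apply, this]
        exact hfib
      · simp only [Function.comp_apply, Fin.succ_last]
        exact hlast
    · intro c hc
      simp only [pathsX, Finset.mem_filter, Finset.mem_univ, true_and] at hc ⊢
      obtain ⟨h0, hmono, hlast⟩ := hc
      have hmono' : StrictMono (Fin.cons (⟨j - 1, hj1n2⟩ : Fin (n + 2)) c) := by
        rw [Fin.strictMono_iff_lt_succ]
        intro i
        induction i using Fin.cases with
        | zero =>
          rw [Fin.castSucc_zero, Fin.cons_zero, Fin.succ_zero_eq_one]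
          have : (1 : Fin (L + 2)) = (0 : Fin (L + 1)).succ := by
            apply Fin.ext; simp
          rw [this, Fin.cons_succ, Fin.lt_def]
          simp only []
          omega
        | succ i =>
          rw [← Fin.succ_castSucc, Fin.cons_succ, Fin.cons_succ]
          exact Fin.strictMono_iff_lt_succ.mp hmono i
      refine ⟨⟨by rw [Fin.cons_zero], hmono', ?_⟩, ?_⟩
      · rw [show Fin.last (L + 1) = (Fin.last L).succ from (Fin.succ_last L).symm,
          Fin.cons_succ]
        exact hlast
      · have : (1 : Fin (L + 2)) = (0 : Fin (L + 1)).succ := by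
          apply Fin.ext; simp
        rw [this, Fin.cons_succ]
        exact h0
    · intro c hc
      simp only [pathsX, Finset.mem_filter, Finset.mem_univ, true_and] at hc
      obtain ⟨⟨h0, hmono, hlast⟩, hfib⟩ := hc
      funext i
      induction i using Fin.cases with
      | zero => rw [Fin.cons_zero]; exact Fin.ext (by simp [h0])
      | succ i => rw [Fin.cons_succ]; rfl
    · intro c hc
      funext i
      simp only [Function.comp_apply, Fin.cons_succ]
    · intro c hc
      simp only [pathsX, Finset.mem_filter, Finset.mem_univ, true_and] at hc
      obtain ⟨⟨h0, hmono, hlast⟩, hfib⟩ := hc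
      rw [Fin.prod_univ_succ
        (f := fun i : Fin (L + 1) => h (i : ℕ) (c i.castSucc : ℕ) (c i.succ : ℕ))]
      have e0 : h ((0 : Fin (L + 1)) : ℕ) (c (0 : Fin (L + 1)).castSucc : ℕ)
          (c (0 : Fin (L + 1)).succ : ℕ) = 1 := by
        rw [Fin.castSucc_zero]
        have : (0 : Fin (L + 1)).succ = (1 : Fin (L + 2)) := by
          apply Fin.ext; simp
        rw [this]
        simpa [h0, hfib] using h1
      rw [e0, one_mul]
      apply Finset.prod_congr rfl
      intro i _
      simp [Function.comp_apply, Fin.val_succ]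
  · -- paths with a genuine first run: move the first point one step right
    rw [T2, Finset.mul_sum]
    apply Finset.sum_nbij' (i := fun c => Function.update c 0 ⟨j, hjn2⟩)
      (j := fun c => Function.update c 0 ⟨j - 1, hj1n2⟩)
    · intro c hc
      simp only [pathsX, Finset.mem_filter, Finset.mem_univ, true_and] at hc ⊢
      obtain ⟨⟨h0, hmono, hlast⟩, hfib⟩ := hc
      have hc1 : j < (c 1 : ℕ) := by
        have := hmono (show (0 : Fin (L + 2)) < 1 by rw [Fin.lt_def]; simp)
        rw [Fin.lt_def] at this
        omega
      refine ⟨by rw [Function.update_self], ?_, ?_⟩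
      · rw [Fin.strictMono_iff_lt_succ]
        intro i
        induction i using Fin.cases with
        | zero =>
          rw [Fin.castSucc_zero, Function.update_self, Fin.succ_zero_eq_one,
            Function.update_of_ne (by simp), Fin.lt_def]
          exact hc1
        | succ i =>
          rw [Function.update_of_ne (by simp [Fin.ext_iff]),
            Function.update_of_ne (by simp [Fin.ext_iff])]
          exact Fin.strictMono_iff_lt_succ.mp hmono i.succ
      · rw [Function.update_of_ne (by simp [Fin.ext_iff])]
        exact hlast
    · intro c hc
      simp only [pathsX, Finset.mem_filter, Finset.mem_univ, true_and] at hc ⊢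
      obtain ⟨h0, hmono, hlast⟩ := hc
      have hc1 : j < (c 1 : ℕ) := by
        have := hmono (show (0 : Fin (L + 2)) < 1 by rw [Fin.lt_def]; simp)
        rw [Fin.lt_def] at this
        omega
      refine ⟨⟨by rw [Function.update_self], ?_, ?_⟩, ?_⟩
      · rw [Fin.strictMono_iff_lt_succ]
        intro i
        induction i using Fin.cases with
        | zero =>
          rw [Fin.castSucc_zero, Function.update_self, Fin.succ_zero_eq_one,
            Function.update_of_ne (by simp), Fin.lt_def]
          have hv : ((⟨j - 1, hj1n2⟩ : Fin (n + 2)) : ℕ) = j - 1 := rfl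
          omega
        | succ i =>
          rw [Function.update_of_ne (by simp [Fin.ext_iff]),
            Function.update_of_ne (by simp [Fin.ext_iff])]
          exact Fin.strictMono_iff_lt_succ.mp hmono i.succ
      · rw [Function.update_of_ne (by simp [Fin.ext_iff])]
        exact hlast
      · rw [Function.update_of_ne (by simp)]
        omega
    · intro c hc
      simp only [pathsX, Finset.mem_filter, Finset.mem_univ, true_and] at hc
      obtain ⟨⟨h0, hmono, hlast⟩, hfib⟩ := hc
      rw [Function.update_idem]
      funext i
      by_cases hi : i = 0
      · subst hi; rw [Function.update_self]; exact Fin.ext (by simp [h0])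
      · rw [Function.update_of_ne hi]
    · intro c hc
      simp only [pathsX, Finset.mem_filter, Finset.mem_univ, true_and] at hc
      obtain ⟨h0, hmono, hlast⟩ := hc
      rw [Function.update_idem]
      funext i
      by_cases hi : i = 0
      · subst hi; rw [Function.update_self]; exact Fin.ext (by simp [h0])
      · rw [Function.update_of_ne hi]
    · intro c hc
      simp only [pathsX, Finset.mem_filter, Finset.mem_univ, true_and] at hc
      obtain ⟨⟨h0, hmono, hlast⟩, hfib⟩ := hc
      have hc1 : j < (c 1 : ℕ) := by
        have := hmono (show (0 : Fin (L + 2)) < 1 by rw [Fin.lt_def]; simp)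
        rw [Fin.lt_def] at this
        omega
      have hc1L : (c 1 : ℕ) + L ≤ n + 1 := by
        have := gap hmono L 1 (Fin.last (L + 1)) (by simp [Fin.val_one]; omega)
        omega
      rw [Fin.prod_univ_succ
        (f := fun i : Fin (L + 1) => h (i : ℕ) (c i.castSucc : ℕ) (c i.succ : ℕ)),
        Fin.prod_univ_succ
        (f := fun i : Fin (L + 1) => h (i : ℕ)
          ((Function.update c 0 ⟨j, hjn2⟩) i.castSucc : ℕ)
          ((Function.update c 0 ⟨j, hjn2⟩) i.succ : ℕ))]
      have e1 : (0 : Fin (L + 1)).succ = (1 : Fin (L + 2)) := by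
        apply Fin.ext; simp
      have etail : ∀ i : Fin L,
          h ((i.succ : Fin (L + 1)) : ℕ)
            ((Function.update c 0 ⟨j, hjn2⟩) (i.succ : Fin (L + 1)).castSucc : ℕ)
            ((Function.update c 0 ⟨j, hjn2⟩) (i.succ : Fin (L + 1)).succ : ℕ)
          = h ((i.succ : Fin (L + 1)) : ℕ) (c (i.succ : Fin (L + 1)).castSucc : ℕ)
            (c (i.succ : Fin (L + 1)).succ : ℕ) := by
        intro i
        rw [Function.update_of_ne (by simp [Fin.ext_iff]),
          Function.update_of_ne (by simp [Fin.ext_iff])]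
      have hhead : h ((0 : Fin (L + 1)) : ℕ) (c (0 : Fin (L + 1)).castSucc : ℕ)
          (c (0 : Fin (L + 1)).succ : ℕ)
          = r * h ((0 : Fin (L + 1)) : ℕ)
            ((Function.update c 0 ⟨j, hjn2⟩) (0 : Fin (L + 1)).castSucc : ℕ)
            ((Function.update c 0 ⟨j, hjn2⟩) (0 : Fin (L + 1)).succ : ℕ) := by
        rw [Fin.castSucc_zero, Function.update_self, e1,
          Function.update_of_ne (by simp)]
        simp only [Fin.val_zero]
        rw [h0]
        exact hr _ hc1 hc1L
      rw [Finset.prod_congr rfl (fun i _ => etail i), hhead]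
      ring

theorem Xsum_eq_T2 (x : ℕ → ℕ → ℚ) (n l m : ℕ) :
    Xsum x n l m = T2 (fun i a b => x (l - i) a / x (l - i) (b - 1)) n l m := rfl

section Ctx

variable {n k : ℕ} {x : ℕ → ℕ → ℚ} (hk : 1 ≤ k) (hkn : k ≤ n)
  (hx : ∀ l m, 1 ≤ l → l ≤ k → k < l + m → l + m ≤ n + 1 → 0 < x l m)

include hx

theorem wtX_pos {l m : ℕ} (hl1 : 1 ≤ l) (hlk : l ≤ k) (hkm : k < l + m)
    (hmn : l + m ≤ n + 1) {c : Fin (l + 1) → Fin (n + 2)} (hc : c ∈ pathsX n l m) :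
    0 < wtX x l c := by
  simp only [pathsX, Finset.mem_filter, Finset.mem_univ, true_and] at hc
  obtain ⟨h0, hmono, hlast⟩ := hc
  have hlow : ∀ i : Fin (l + 1), m + (i : ℕ) ≤ (c i : ℕ) := by
    intro i
    have := gap hmono (i : ℕ) 0 i (by simp)
    omega
  have hup : ∀ i : Fin (l + 1), (c i : ℕ) + (l - (i : ℕ)) ≤ n + 1 := by
    intro i
    have hi : (i : ℕ) ≤ l := by have := i.isLt; omega
    have := gap hmono (l - (i : ℕ)) i (Fin.last l) (by simp; omega)
    omega
  rw [wtX]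
  apply Finset.prod_pos
  intro i _
  have hi : (i : ℕ) < l := i.isLt
  have hlo1 := hlow i.castSucc
  have hup1 := hup i.castSucc
  have hlo2 := hlow i.succ
  have hup2 := hup i.succ
  simp only [Fin.coe_castSucc, Fin.val_succ] at hlo1 hup1 hlo2 hup2
  apply div_pos
  · exact hx (l - (i : ℕ)) _ (by omega) (by omega) (by omega) (by omega)
  · exact hx (l - (i : ℕ)) _ (by omega) (by omega) (by omega) (by omega)

omit hx

theorem pathsX_nonempty {l m : ℕ} (hl1 : 1 ≤ l) (hmn : l + m ≤ n + 1) :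
    ∃ c, c ∈ pathsX n l m := by
  refine ⟨fun i => ⟨if (i : ℕ) < l then m + (i : ℕ) else n + 1, by split <;> omega⟩, ?_⟩
  simp only [pathsX, Finset.mem_filter, Finset.mem_univ, true_and]
  refine ⟨?_, ?_, ?_⟩
  · show (if ((0 : Fin (l + 1)) : ℕ) < l then m + ((0 : Fin (l + 1)) : ℕ) else n + 1) = m
    rw [if_pos (show ((0 : Fin (l + 1)) : ℕ) < l from hl1)]
    rfl
  · intro a b hab
    rw [Fin.lt_def] at hab ⊢
    have ha := a.isLt
    have hb := b.isLt
    show (if (a : ℕ) < l then m + (a : ℕ) else n + 1)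
      < (if (b : ℕ) < l then m + (b : ℕ) else n + 1)
    split <;> split <;> omega
  · show (if ((Fin.last l) : ℕ) < l then m + ((Fin.last l) : ℕ) else n + 1) = n + 1
    rw [if_neg (by simp)]

include hx

theorem Xsum_pos {l m : ℕ} (hl1 : 1 ≤ l) (hlk : l ≤ k) (hkm : k < l + m)
    (hmn : l + m ≤ n + 1) : 0 < Xsum x n l m := by
  obtain ⟨c0, hc0⟩ := pathsX_nonempty (n := n) hl1 hmn
  exact Finset.sum_pos (fun c hc => wtX_pos hx hl1 hlk hkm hmn hc) ⟨c0, hc0⟩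

include hk hkn

theorem x1n_pos : 0 < x 1 n := hx 1 n le_rfl hk (by omega) (by omega)

omit hk hkn

theorem Xsum_one {m : ℕ} (hmn : m ≤ n) :
    Xsum x n 1 m = x 1 m / x 1 n := by
  have hm2 : m < n + 2 := by omega
  have hn2 : n + 1 < n + 2 := by omega
  have key : pathsX n 1 m
      = {(fun i => if (i : ℕ) = 0 then ⟨m, hm2⟩ else ⟨n + 1, hn2⟩ :
          Fin (1 + 1) → Fin (n + 2))} := by
    apply Finset.ext
    intro c
    simp only [pathsX, Finset.mem_filter, Finset.mem_univ, true_and,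
      Finset.mem_singleton]
    constructor
    · rintro ⟨h0, hmono, hlast⟩
      funext i
      show c i = if (i : ℕ) = 0 then ⟨m, hm2⟩ else ⟨n + 1, hn2⟩
      by_cases hi : (i : ℕ) = 0
      · have e : i = 0 := Fin.ext (by simpa using hi)
        subst e
        rw [if_pos (by simp)]
        exact Fin.ext h0
      · have e : i = 1 := Fin.ext (by have := i.isLt; simp [Fin.val_one]; omega)
        subst e
        rw [if_neg (by simp [Fin.val_one])]
        apply Fin.ext
        show ((c 1 : Fin (n + 2)) : ℕ) = n + 1
        have e1 : (1 : Fin 2) = Fin.last 1 := rfl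
        rw [e1]
        exact hlast
    · rintro rfl
      refine ⟨rfl, ?_, rfl⟩
      intro a b hab
      rw [Fin.lt_def] at hab ⊢
      have ha := a.isLt
      have hb := b.isLt
      show (if (a : ℕ) = 0 then (⟨m, hm2⟩ : Fin (n + 2)) else ⟨n + 1, hn2⟩).val
        < (if (b : ℕ) = 0 then (⟨m, hm2⟩ : Fin (n + 2)) else ⟨n + 1, hn2⟩).val
      split <;> split <;> simp_all <;> omega
  rw [Xsum, key, Finset.sum_singleton, wtX, Fin.prod_univ_one]
  rfl

theorem Xsum_rec {l j : ℕ} (hl2 : 2 ≤ l) (hlk : l ≤ k) (hkj : k + 1 < l + j)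
    (hjn : l + j ≤ n + 2) :
    Xsum x n l (j - 1) = Xsum x n (l - 1) j + (x l (j - 1) / x l j) * Xsum x n l j := by
  obtain ⟨L, rfl⟩ : ∃ L, l = L + 1 := ⟨l - 1, by omega⟩
  have hL1 : 1 ≤ L := by omega
  have hsub : L + 1 - 1 = L := rfl
  rw [hsub, Xsum_eq_T2 x n (L + 1) (j - 1), Xsum_eq_T2 x n (L + 1) j,
    Xsum_eq_T2 x n L j]
  have hone : (fun i a b => x (L + 1 - i) a / x (L + 1 - i) (b - 1)) 0 (j - 1) j = 1 := by
    simp only [Nat.sub_zero]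
    apply div_self
    have : 0 < x (L + 1) (j - 1) := hx (L + 1) (j - 1) (by omega) (by omega)
      (by omega) (by omega)
    exact ne_of_gt this
  have hr : ∀ b, j < b → b + L ≤ n + 1 →
      (fun i a b => x (L + 1 - i) a / x (L + 1 - i) (b - 1)) 0 (j - 1) b
        = (x (L + 1) (j - 1) / x (L + 1) j)
          * ((fun i a b => x (L + 1 - i) a / x (L + 1 - i) (b - 1)) 0 j b) := by
    intro b hb hbn
    simp only [Nat.sub_zero]
    have hxj : x (L + 1) j ≠ 0 := by
      have : 0 < x (L + 1) j := hx (L + 1) j (by omega) (by omega) (by omega) (by omega)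
      exact ne_of_gt this
    rw [div_mul_div_comm, mul_comm (x (L + 1) (j - 1)) (x (L + 1) j),
      mul_div_mul_left _ _ hxj]
  rw [T2_split _ n L j (by omega) (by omega) hone _ hr]
  congr 1
  apply T2_congr
  intro i a b hiL
  have e : L + 1 - (i + 1) = L - i := by omega
  simp only [e]

end Ctx

theorem Ysum_base (y : ℕ → ℕ → ℚ) (n k m : ℕ) : YstarSum y n k k m = 1 := by
  rw [YstarSum_eq_S2, Nat.sub_self, S2_zero]

theorem Ysum_rec (y : ℕ → ℕ → ℚ) {n k l m : ℕ} (hlk : l + 1 ≤ k) (hm : m ≤ n + 1) :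
    YstarSum y n k l m = ∑ j ∈ Finset.Icc (k - l) m,
      (y l j / y (l + 1) (j - 1)) * YstarSum y n k (l + 1) (j - 1) := by
  have h1 : k - l = (k - (l + 1)) + 1 := by omega
  rw [YstarSum_eq_S2, h1, S2_rec _ _ _ _ hm]
  apply Finset.sum_congr (by rw [← h1])
  intro j hj
  rw [YstarSum_eq_S2 y n k (l + 1) (j - 1)]
  have e1 : k - (k - (l + 1)) - 1 = l := by omega
  have e2 : k - (k - (l + 1)) = l + 1 := by omega
  simp only [e1]
  simp only [e2]

section Ctx2

variable {n k : ℕ} {x : ℕ → ℕ → ℚ} (hk : 1 ≤ k) (hkn : k ≤ n)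
  (hx : ∀ l m, 1 ≤ l → l ≤ k → k < l + m → l + m ≤ n + 1 → 0 < x l m)

theorem XE_eq_Xsum {l m : ℕ} (hlk : l ≤ k) (hkm : k < l + m) :
    XE x n k l m = Xsum x n l m := by
  rw [XE, if_neg (by omega), if_neg (by omega)]

theorem XE_boundary {l m : ℕ} (hlk : l ≤ k) (h : l + m = k) :
    XE x n k l m = (x 1 n)⁻¹ := by
  rw [XE, if_neg (by omega), if_pos h]

theorem XE_top (m : ℕ) : XE x n k (k + 1) m = 1 := by
  rw [XE, if_pos (by omega)]

include hk hkn hx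

theorem XE_pos {l m : ℕ} (h1 : 1 ≤ l) (h2 : l ≤ k + 1) (h3 : k ≤ l + m)
    (h4 : l + m ≤ n + 1) : 0 < XE x n k l m := by
  rcases Nat.lt_or_ge k l with h | h
  · have heq : l = k + 1 := by omega
    subst heq
    rw [XE_top]
    norm_num
  · by_cases he : l + m = k
    · rw [XE_boundary h he]
      exact inv_pos.mpr (x1n_pos hk hkn hx)
    · rw [XE_eq_Xsum h (by omega)]
      exact Xsum_pos hx h1 h (by omega) h4

theorem Gtel {l : ℕ} (hl1 : 1 ≤ l) (hlk : l + 1 ≤ k) :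
    ∀ m, k - l ≤ m → l + m ≤ n →
    ∑ j ∈ Finset.Icc (k - l) m,
        x (l + 1) j * XE x n k l j / (XE x n k (l + 1) j * XE x n k (l + 1) (j - 1))
      = x (l + 1) m / Xsum x n (l + 1) m := by
  refine Nat.le_induction ?_ ?_
  · intro hn
    rw [Finset.Icc_self, Finset.sum_singleton]
    rw [show XE x n k l (k - l) = (x 1 n)⁻¹ from XE_boundary (by omega) (by omega),
      show XE x n k (l + 1) (k - l - 1) = (x 1 n)⁻¹ from
        XE_boundary (by omega) (by omega),
      show XE x n k (l + 1) (k - l) = Xsum x n (l + 1) (k - l) from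
        XE_eq_Xsum (by omega) (by omega)]
    rw [mul_div_mul_right _ _ (inv_ne_zero (ne_of_gt (x1n_pos hk hkn hx)))]
  · intro m hm ih hn
    have ihv := ih (by omega)
    rw [Finset.sum_Icc_succ_top (by omega), ihv]
    rw [show XE x n k l (m + 1) = Xsum x n l (m + 1) from
        XE_eq_Xsum (by omega) (by omega),
      show XE x n k (l + 1) (m + 1) = Xsum x n (l + 1) (m + 1) from
        XE_eq_Xsum (by omega) (by omega),
      show XE x n k (l + 1) (m + 1 - 1) = Xsum x n (l + 1) m from
        XE_eq_Xsum (by omega) (by omega)]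
    have hrec := Xsum_rec hx (l := l + 1) (j := m + 1) (by omega) hlk (by omega) (by omega)
    simp only [show m + 1 - 1 = m from rfl, show l + 1 - 1 = l from rfl] at hrec
    have hP : 0 < Xsum x n (l + 1) m := Xsum_pos hx (by omega) hlk (by omega) (by omega)
    have hQ : 0 < Xsum x n (l + 1) (m + 1) := Xsum_pos hx (by omega) hlk (by omega) (by omega)
    have ha : 0 < x (l + 1) m := hx (l + 1) m (by omega) (by omega) (by omega) (by omega)
    have hb : 0 < x (l + 1) (m + 1) := hx (l + 1) (m + 1) (by omega) (by omega) (by omega) (by omega)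
    have key : x (l + 1) (m + 1) * Xsum x n (l + 1) m
        = x (l + 1) (m + 1) * Xsum x n l (m + 1)
          + x (l + 1) m * Xsum x n (l + 1) (m + 1) := by
      rw [hrec]
      field_simp
    rw [div_add_div _ _ (ne_of_gt hP) (ne_of_gt (mul_pos hQ hP)),
      div_eq_div_iff (ne_of_gt (mul_pos hP (mul_pos hQ hP))) (ne_of_gt hQ)]
    linear_combination (-(Xsum x n (l + 1) (m + 1) * Xsum x n (l + 1) m)) * key


theorem Emain : ∀ d l, l ≤ k → k - l = d → ∀ m, k ≤ l + m → l + m ≤ n →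
    YstarE (SigmaMap x n k) n k l m
      = (if l + 1 ≤ k then x (l + 1) m else 1) / XE x n k (l + 1) m := by
  intro d
  induction d using Nat.strong_induction_on with
  | _ d ih =>
  intro l hlk hd m hkm hmn
  by_cases hl0 : l = 0
  · subst hl0
    have hy : SigmaMap x n k k 0 = (x 1 n)⁻¹ := by
      rw [SigmaMap, if_neg (by omega), XE_boundary (le_refl k) (by omega), XE_top,
        one_mul, div_one]
    rw [YstarE, if_pos rfl, hy, inv_inv, if_pos (by omega),
      XE_eq_Xsum (by omega) (by omega), Xsum_one hx (by omega)]
    have h1 : x 1 m ≠ 0 := ne_of_gt (hx 1 m (by omega) (by omega) (by omega) (by omega))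
    have h2 : x 1 n ≠ 0 := ne_of_gt (x1n_pos hk hkn hx)
    rw [zero_add]
    field_simp
  · by_cases hlek : l = k
    · subst hlek
      rw [YstarE, if_neg hl0, Ysum_base, if_neg (by omega), XE_top]
      norm_num
    · have hl1 : 1 ≤ l := by omega
      have hlk1 : l + 1 ≤ k := by omega
      rw [YstarE, if_neg hl0, Ysum_rec _ hlk1 (by omega)]
      have hterm : ∀ j ∈ Finset.Icc (k - l) m,
          (SigmaMap x n k l j / SigmaMap x n k (l + 1) (j - 1))
            * YstarSum (SigmaMap x n k) n k (l + 1) (j - 1)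
          = x (l + 1) j * XE x n k l j
            / (XE x n k (l + 1) j * XE x n k (l + 1) (j - 1)) := by
        intro j hj
        simp only [Finset.mem_Icc] at hj
        have hkj : k ≤ l + j := by omega
        have hjn : l + j ≤ n := by omega
        have hj1 : 1 ≤ j := by omega
        have hY : YstarSum (SigmaMap x n k) n k (l + 1) (j - 1)
            = (if l + 1 + 1 ≤ k then x (l + 1 + 1) (j - 1) else 1)
              / XE x n k (l + 1 + 1) (j - 1) := by
          have hI := ih (k - (l + 1)) (by omega) (l + 1) (by omega) rfl (j - 1)
            (by omega) (by omega)
          rw [YstarE, if_neg (by omega)] at hI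
          exact hI
        have hA : 0 < XE x n k l j :=
          XE_pos hk hkn hx (by omega) (by omega) (by omega) (by omega)
        have hB : 0 < XE x n k (l + 1) j :=
          XE_pos hk hkn hx (by omega) (by omega) (by omega) (by omega)
        have hC : 0 < XE x n k (l + 1) (j - 1) :=
          XE_pos hk hkn hx (by omega) (by omega) (by omega) (by omega)
        have hD : 0 < XE x n k (l + 1 + 1) (j - 1) :=
          XE_pos hk hkn hx (by omega) (by omega) (by omega) (by omega)
        have hu : (0:ℚ) < if l + 1 + 1 ≤ k then x (l + 1 + 1) (j - 1) else 1 := by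
          split
          · exact hx (l + 1 + 1) (j - 1) (by omega) (by omega) (by omega) (by omega)
          · norm_num
        have ha : 0 < x (l + 1) j :=
          hx (l + 1) j (by omega) (by omega) (by omega) (by omega)
        rw [hY, SigmaMap, SigmaMap, if_pos hlk1]
        set u := (if l + 1 + 1 ≤ k then x (l + 1 + 1) (j - 1) else 1) with hu'
        set A := XE x n k l j with hA'
        set B := XE x n k (l + 1) j with hB'
        set C := XE x n k (l + 1) (j - 1) with hC'
        set D := XE x n k (l + 1 + 1) (j - 1) with hD'
        field_simp
      rw [Finset.sum_congr rfl hterm, Gtel hk hkn hx hl1 hlk1 m (by omega) hmn,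
        if_pos hlk1, XE_eq_Xsum (by omega) (by omega)]

end Ctx2

end Stmt4Aux

/-- the key inductive identity
`x^{(l)}_m = X^{(l)}_m(x) ⬝ Y^{*(l-1)}_m(Σ(x))` for all `1 ≤ l ≤ k < l+m ≤ n+1`. -/
theorem stmt4 (n k : ℕ) (hk : 1 ≤ k) (hkn : k ≤ n) (x : ℕ → ℕ → ℚ)
    (hx : ∀ l m, 1 ≤ l → l ≤ k → k < l + m → l + m ≤ n + 1 → 0 < x l m) :
    ∀ l m, 1 ≤ l → l ≤ k → k < l + m → l + m ≤ n + 1 →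
      x l m = Xsum x n l m * YstarE (SigmaMap x n k) n k (l - 1) m := by
  intro l m hl1 hlk hkm hmn
  have hE := Stmt4Aux.Emain hk hkn hx (k - (l - 1)) (l - 1) (by omega) rfl m
    (by omega) (by omega)
  have e : l - 1 + 1 = l := by omega
  rw [e] at hE
  rw [hE, if_pos hlk, Stmt4Aux.XE_eq_Xsum hlk hkm]
  have hXpos : Xsum x n l m ≠ 0 :=
    ne_of_gt (Stmt4Aux.Xsum_pos hx hl1 hlk hkm hmn)
  field_simp
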